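/- Fix α > 0, and for r > 0 and x ∈ ℂ define I_r(x) := ∫_{−π}^{π} r / |r·e^{iθ} − x|^{2+α} dθ. Then there exists a constant a > 1, depending only on α, such that for all r > 0 and all x ∈ ℂ with |x| > r, a^{−1}·r/(|x|·(|x| − r)^{1+α}) ≤ I_r(x) ≤ a·r/(|x|·(|x| − r)^{1+α}). -/

import Mathlib

set_option maxHeartbeats 1600000
open Real intervalIntegral MeasureTheory

noncomputable def Icirc (α : ℝ) (r : ℝ) (x : ℂ) : ℝ :=
  ∫ θ in (-Real.pi)..Real.pi,
    r / ‖(r : ℂ) * Complex.exp ((θ : ℂ) * Complex.I) - x‖ ^ (2 + α)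

section aux
variable {α r R : ℝ}

lemma absval (r R θ : ℝ) :
    ‖(r : ℂ) * Complex.exp ((θ : ℂ) * Complex.I) - (R : ℂ)‖
      = Real.sqrt ((R - r)^2 + 4*r*R*(Real.sin (θ/2))^2) := by
  rw [Complex.norm_def, Complex.normSq_apply]
  congr 1
  have h1 : ((r : ℂ) * Complex.exp ((θ : ℂ) * Complex.I) - (R : ℂ)).re
      = r * Real.cos θ - R := by
    simp [Complex.exp_ofReal_mul_I_re]
  have h2 : ((r : ℂ) * Complex.exp ((θ : ℂ) * Complex.I) - (R : ℂ)).im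
      = r * Real.sin θ := by
    simp [Complex.exp_ofReal_mul_I_im]
  rw [h1, h2]
  have hs : Real.sin (θ/2) ^ 2 = 1/2 - Real.cos θ / 2 := by
    have := Real.sin_sq_eq_half_sub (θ/2)
    rwa [show 2*(θ/2) = θ by ring] at this
  have hpy := Real.sin_sq_add_cos_sq θ
  linear_combination r^2*hpy - 4*r*R*hs

lemma abs_upper {r R : ℝ} (hr : 0 ≤ r) (hR : r ≤ R) (θ : ℝ) :
    ‖(r : ℂ) * Complex.exp ((θ : ℂ) * Complex.I) - (R : ℂ)‖
      ≤ (R - r) + Real.sqrt (r*R) * |θ| := by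
  rw [absval]
  have hrR : (0:ℝ) ≤ r * R := mul_nonneg hr (hr.trans hR)
  have hs2 : Real.sqrt (r*R) ^ 2 = r * R := Real.sq_sqrt hrR
  have hsin : Real.sin (θ/2) ^ 2 ≤ (θ/2)^2 := Real.sin_sq_le_sq
  have h0 : 0 ≤ Real.sqrt (r*R) * |θ| := by positivity
  have hd0 : (0:ℝ) ≤ R - r := by linarith
  have hB : (0:ℝ) ≤ (R - r) + Real.sqrt (r*R) * |θ| := by linarith
  have hss : Real.sqrt (r*R)^2 * |θ|^2 = r*R*θ^2 := by rw [hs2, sq_abs]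
  have key : (R - r)^2 + 4*r*R*(Real.sin (θ/2))^2
      ≤ ((R - r) + Real.sqrt (r*R) * |θ|)^2 := by
    nlinarith [mul_le_mul_of_nonneg_left hsin (by linarith : (0:ℝ) ≤ 4*(r*R)),
      mul_nonneg hd0 h0, hss]
  calc Real.sqrt ((R - r)^2 + 4*r*R*(Real.sin (θ/2))^2)
      ≤ Real.sqrt (((R - r) + Real.sqrt (r*R) * |θ|)^2) := Real.sqrt_le_sqrt key
    _ = (R - r) + Real.sqrt (r*R) * |θ| := Real.sqrt_sq hB

lemma abs_lower {r R : ℝ} (hr : 0 ≤ r) (hR : r < R) {θ : ℝ} (hθ : |θ| ≤ π) :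
    (R - r) + Real.sqrt (r*R) * |θ|
      ≤ π * ‖(r : ℂ) * Complex.exp ((θ : ℂ) * Complex.I) - (R : ℂ)‖ := by
  rw [absval]
  have hR0 : 0 < R := lt_of_le_of_lt hr hR
  have hrR : (0:ℝ) ≤ r * R := mul_nonneg hr hR0.le
  have hsin0 : (0:ℝ) ≤ r*R*(Real.sin (θ/2))^2 := mul_nonneg hrR (sq_nonneg _)
  have hA0 : 0 ≤ (R - r)^2 + 4*r*R*(Real.sin (θ/2))^2 := by nlinarith [sq_nonneg (R-r)]
  have h1 : R - r ≤ Real.sqrt ((R - r)^2 + 4*r*R*(Real.sin (θ/2))^2) := by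
    rw [Real.le_sqrt (by linarith) hA0]
    nlinarith
  have hπ0 : (0:ℝ) < π := Real.pi_pos
  have hj : 2/π * |θ/2| ≤ |Real.sin (θ/2)| := by
    apply Real.mul_abs_le_abs_sin
    rw [abs_div, abs_two]
    linarith
  have hj' : |θ| ≤ π * |Real.sin (θ/2)| := by
    rw [div_mul_eq_mul_div, div_le_iff₀ hπ0] at hj
    have h2θ : |θ| = 2*|θ/2| := by rw [abs_div, abs_two]; ring
    linarith
  have hs2 : Real.sqrt (r*R) ^ 2 = r * R := Real.sq_sqrt hrR
  have hsqA : 2 * (Real.sqrt (r*R) * |Real.sin (θ/2)|)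
      ≤ Real.sqrt ((R - r)^2 + 4*r*R*(Real.sin (θ/2))^2) := by
    rw [Real.le_sqrt (by positivity) hA0]
    have hexp : (2 * (Real.sqrt (r*R) * |Real.sin (θ/2)|))^2 = 4*r*R*(Real.sin (θ/2))^2 := by
      rw [mul_pow, mul_pow, hs2, sq_abs]; ring
    nlinarith [sq_nonneg (R - r)]
  have h2 : 2 * (Real.sqrt (r*R) * |θ|)
      ≤ π * Real.sqrt ((R - r)^2 + 4*r*R*(Real.sin (θ/2))^2) := by
    have ha := mul_le_mul_of_nonneg_left hj' (Real.sqrt_nonneg (r*R))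
    have hb := mul_le_mul_of_nonneg_left hsqA hπ0.le
    nlinarith [Real.sqrt_nonneg (r*R), abs_nonneg (Real.sin (θ/2))]
  have hπ3 := Real.pi_gt_three
  nlinarith [Real.sqrt_nonneg ((R - r)^2 + 4*r*R*(Real.sin (θ/2))^2),
    mul_nonneg (Real.sqrt_nonneg (r*R)) (abs_nonneg θ)]

lemma d_le_abs (hr : 0 ≤ r) (hR : r ≤ R) (θ : ℝ) :
    R - r ≤ ‖(r : ℂ) * Complex.exp ((θ : ℂ) * Complex.I) - (R : ℂ)‖ := by
  rw [absval]
  have hrR : (0:ℝ) ≤ r * R := mul_nonneg hr (hr.trans hR)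
  have h0 : 0 ≤ (R-r)^2 + 4*r*R*(Real.sin (θ/2))^2 := by
    nlinarith [mul_nonneg hrR (sq_nonneg (Real.sin (θ/2))), sq_nonneg (R-r)]
  rw [Real.le_sqrt (by linarith) h0]
  nlinarith [mul_nonneg hrR (sq_nonneg (Real.sin (θ/2)))]

lemma Icirc_rot (α r : ℝ) (x : ℂ) :
    Icirc α r x = Icirc α r ((‖x‖ : ℝ) : ℂ) := by
  set g : ℝ → ℝ := fun θ =>
    r / ‖(r : ℂ) * Complex.exp ((θ : ℂ) * Complex.I) - x‖ ^ (2 + α) with hg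
  have hper : Function.Periodic g (2*π) := by
    intro θ
    simp only [hg]
    congr 3
    push_cast
    rw [add_mul, Complex.exp_add, Complex.exp_two_pi_mul_I, mul_one]
  have key : ∀ θ : ℝ, r / ‖(r : ℂ) * Complex.exp ((θ : ℂ) * Complex.I)
      - ((‖x‖ : ℝ) : ℂ)‖ ^ (2 + α) = g (θ + Complex.arg x) := by
    intro θ
    have h1 : ((r:ℂ) * Complex.exp (((θ + Complex.arg x : ℝ) : ℂ) * Complex.I) - x)
        = Complex.exp ((Complex.arg x : ℂ) * Complex.I) *
          ((r:ℂ) * Complex.exp ((θ:ℂ) * Complex.I) - ((‖x‖ : ℝ) : ℂ)) := by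
      have hexp : Complex.exp (((θ + Complex.arg x : ℝ) : ℂ) * Complex.I)
          = Complex.exp ((θ:ℂ) * Complex.I) * Complex.exp ((Complex.arg x : ℂ) * Complex.I) := by
        push_cast
        rw [add_mul, Complex.exp_add]
      rw [hexp]
      linear_combination Complex.norm_mul_exp_arg_mul_I x
    have h2 : ‖(r:ℂ) * Complex.exp (((θ + Complex.arg x : ℝ) : ℂ) * Complex.I) - x‖
        = ‖(r:ℂ) * Complex.exp ((θ:ℂ) * Complex.I) - ((‖x‖ : ℝ) : ℂ)‖ := by
      rw [h1, norm_mul, Complex.norm_exp_ofReal_mul_I, one_mul]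
    simp only [hg]
    rw [h2]
  symm
  calc Icirc α r ((‖x‖ : ℝ) : ℂ)
      = ∫ θ in (-π)..π, g (θ + Complex.arg x) := by
        unfold Icirc; exact intervalIntegral.integral_congr (fun θ _ => key θ)
    _ = ∫ θ in (-π + Complex.arg x)..(π + Complex.arg x), g θ :=
        intervalIntegral.integral_comp_add_right g (Complex.arg x)
    _ = ∫ θ in (-π)..π, g θ := by
        have h1 : (π : ℝ) + Complex.arg x = (-π + Complex.arg x) + 2*π := by ring
        have h2 : (π : ℝ) = -π + 2*π := by ring
        rw [h1, hper.intervalIntegral_add_eq (-π + Complex.arg x) (-π), ← h2]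
    _ = Icirc α r x := rfl

end aux

lemma Icirc_bounds_real {α r R : ℝ} (hα : 0 < α) (hr : 0 < r) (hR : r < R) :
    (2:ℝ)^(-(2+α)) * (r/(R*(R-r)^(1+α))) ≤ Icirc α r ((R:ℝ):ℂ) ∧
    Icirc α r ((R:ℝ):ℂ) ≤ 8*π*π^(2+α) * (r/(R*(R-r)^(1+α))) := by
  have hR0 : 0 < R := hr.trans hR
  have hd : 0 < R - r := by linarith
  have hrR : (0:ℝ) < r * R := mul_pos hr hR0
  have hs : 0 < Real.sqrt (r*R) := Real.sqrt_pos.mpr hrR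
  set d := R - r with hdd
  set s := Real.sqrt (r*R) with hss
  have hs2 : s^2 = r*R := Real.sq_sqrt hrR.le
  have hsR : s ≤ R := by
    rw [hss, show r*R = R*r by ring]
    calc Real.sqrt (R*r) ≤ Real.sqrt (R*R) := Real.sqrt_le_sqrt (by nlinarith)
      _ = R := Real.sqrt_mul_self hR0.le
  have hπ0 : (0:ℝ) < π := Real.pi_pos
  have hπ3 : (3:ℝ) < π := Real.pi_gt_three
  have hπ1 : (1:ℝ) ≤ π := by linarith
  set f : ℝ → ℝ := fun θ => r / (d + s*|θ|)^(2+α) with hf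
  set h : ℝ → ℝ := fun θ =>
    r / ‖(r : ℂ) * Complex.exp ((θ : ℂ) * Complex.I) - (R:ℂ)‖ ^ (2 + α) with hh
  have hIcirc : Icirc α r ((R:ℝ):ℂ) = ∫ θ in (-π)..π, h θ := rfl
  have hbase : ∀ θ : ℝ, 0 < d + s*|θ| := fun θ =>
    lt_of_lt_of_le hd (le_add_of_nonneg_right (mul_nonneg hs.le (abs_nonneg θ)))
  have habs_pos : ∀ θ : ℝ, 0 < ‖(r:ℂ) * Complex.exp ((θ:ℂ) * Complex.I) - (R:ℂ)‖ :=
    fun θ => lt_of_lt_of_le hd (d_le_abs hr.le hR.le θ)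
  -- continuity and integrability
  have habs_cont : Continuous fun θ : ℝ =>
      ‖(r:ℂ) * Complex.exp ((θ:ℂ) * Complex.I) - (R:ℂ)‖ := by
    apply continuous_norm.comp
    exact (continuous_const.mul (Complex.continuous_exp.comp
      (Complex.continuous_ofReal.mul continuous_const))).sub continuous_const
  have hcont_h : Continuous h := by
    apply continuous_const.div
    · exact habs_cont.rpow_const (fun θ => Or.inl (habs_pos θ).ne')
    · exact fun θ => (Real.rpow_pos_of_pos (habs_pos θ) _).ne'
  have hcont_f : Continuous f := by
    apply continuous_const.div
    · exact (continuous_const.add (continuous_const.mul continuous_abs)).rpow_const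
        (fun θ => Or.inl (hbase θ).ne')
    · exact fun θ => (Real.rpow_pos_of_pos (hbase θ) _).ne'
  have hint_h : ∀ a b : ℝ, IntervalIntegrable h volume a b :=
    fun a b => hcont_h.intervalIntegrable a b
  have hint_f : ∀ a b : ℝ, IntervalIntegrable f volume a b :=
    fun a b => hcont_f.intervalIntegrable a b
  have hf_nonneg : ∀ θ : ℝ, 0 ≤ f θ := fun θ =>
    div_nonneg hr.le (Real.rpow_nonneg (hbase θ).le _)
  -- pointwise comparisons
  have hfh : ∀ θ : ℝ, f θ ≤ h θ := by
    intro θ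
    exact div_le_div_of_nonneg_left hr.le (Real.rpow_pos_of_pos (habs_pos θ) _)
      (Real.rpow_le_rpow (habs_pos θ).le (abs_upper hr.le hR.le θ) (by linarith))
  have hhf : ∀ θ ∈ Set.Icc (-π) π, h θ ≤ π^(2+α) * f θ := by
    intro θ hθ
    have hθ' : |θ| ≤ π := abs_le.mpr ⟨hθ.1, hθ.2⟩
    have hA := habs_pos θ
    have h1 : (d + s*|θ|)^(2+α) ≤ π^(2+α) *
        ‖(r:ℂ) * Complex.exp ((θ:ℂ) * Complex.I) - (R:ℂ)‖ ^ (2+α) := by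
      calc (d + s*|θ|)^(2+α)
          ≤ (π * ‖(r:ℂ) * Complex.exp ((θ:ℂ) * Complex.I) - (R:ℂ)‖)^(2+α) :=
            Real.rpow_le_rpow (hbase θ).le (abs_lower hr.le hR hθ') (by linarith)
        _ = _ := Real.mul_rpow hπ0.le hA.le
    have h2 : π^(2+α) * f θ = (π^(2+α) * r) / (d + s*|θ|)^(2+α) := by
      simp only [hf]; ring
    rw [hh, h2, div_le_div_iff₀ (Real.rpow_pos_of_pos hA _) (Real.rpow_pos_of_pos (hbase θ) _)]
    calc r * (d + s*|θ|)^(2+α)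
        ≤ r * (π^(2+α) *
            ‖(r:ℂ) * Complex.exp ((θ:ℂ) * Complex.I) - (R:ℂ)‖ ^ (2+α)) :=
          mul_le_mul_of_nonneg_left h1 hr.le
      _ = π^(2+α) * r *
            ‖(r:ℂ) * Complex.exp ((θ:ℂ) * Complex.I) - (R:ℂ)‖ ^ (2+α) := by ring
  -- abbreviations for rpow quantities
  have hsplit : ∀ t : ℝ, 0 < t → t^(2+α) = t * t^(1+α) := by
    intro t ht
    rw [show (2:ℝ)+α = 1+(1+α) by ring, Real.rpow_add ht, Real.rpow_one]
  have hD : (0:ℝ) < d^(1+α) := Real.rpow_pos_of_pos hd _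
  have hP : (0:ℝ) < (2:ℝ)^(2+α) := Real.rpow_pos_of_pos two_pos _
  have hπe : (0:ℝ) < π^(2+α) := Real.rpow_pos_of_pos hπ0 _
  have hde : (0:ℝ) < d^(2+α) := Real.rpow_pos_of_pos hd _
  have h2d : (2*d)^(2+α) = (2:ℝ)^(2+α) * (d * d^(1+α)) := by
    rw [Real.mul_rpow (by norm_num) hd.le, hsplit d hd]
  -- LOWER BOUND
  have lower : (2:ℝ)^(-(2+α)) * (r/(R*d^(1+α))) ≤ Icirc α r ((R:ℝ):ℂ) := by
    set m := min π (d/s) with hm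
    have hm0 : 0 ≤ m := le_min hπ0.le (div_pos hd hs).le
    have hmπ : m ≤ π := min_le_left _ _
    have hsm : s * m ≤ d := by
      have h1 : m ≤ d/s := min_le_right _ _
      rw [le_div_iff₀ hs] at h1
      linarith [h1]
    have step1 : (∫ θ in (-π)..π, f θ) ≤ Icirc α r ((R:ℝ):ℂ) := by
      rw [hIcirc]
      exact integral_mono_on (by linarith) (hint_f _ _) (hint_h _ _) (fun θ _ => hfh θ)
    have step2 : (∫ θ in (0:ℝ)..m, f θ) ≤ ∫ θ in (-π)..π, f θ :=
      integral_mono_interval (by linarith) hm0 hmπ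
        (Filter.Eventually.of_forall (fun θ => hf_nonneg θ)) (hint_f _ _)
    have step3 : m * (r/(2*d)^(2+α)) ≤ ∫ θ in (0:ℝ)..m, f θ := by
      have hconst : (∫ _ in (0:ℝ)..m, r/(2*d)^(2+α)) = m * (r/(2*d)^(2+α)) := by
        simp [intervalIntegral.integral_const, smul_eq_mul, mul_div_assoc]
      rw [← hconst]
      apply integral_mono_on hm0 (intervalIntegrable_const) (hint_f _ _)
      intro θ hθ
      have habs : |θ| = θ := abs_of_nonneg hθ.1
      have hb : d + s*|θ| ≤ 2*d := by
        rw [habs]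
        have : s * θ ≤ s * m := mul_le_mul_of_nonneg_left hθ.2 hs.le
        linarith
      exact div_le_div_of_nonneg_left hr.le (Real.rpow_pos_of_pos (hbase θ) _)
        (Real.rpow_le_rpow (hbase θ).le hb (by linarith))
    have hkey : (2:ℝ)^(-(2+α)) * (r/(R*d^(1+α))) ≤ m * (r/(2*d)^(2+α)) := by
      rw [Real.rpow_neg (by norm_num : (0:ℝ) ≤ 2), h2d, inv_mul_eq_div, div_div]
      rcases le_total (d/s) π with hcase | hcase
      · rw [hm, min_eq_right hcase]
        have heq : (d/s)*(r/((2:ℝ)^(2+α)*(d*d^(1+α)))) = r/(s*((2:ℝ)^(2+α)*d^(1+α))) := by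
          field_simp
        rw [heq]
        apply div_le_div_of_nonneg_left hr.le (by positivity)
        calc s*((2:ℝ)^(2+α)*d^(1+α)) ≤ R*((2:ℝ)^(2+α)*d^(1+α)) :=
              mul_le_mul_of_nonneg_right hsR (by positivity)
          _ = R*d^(1+α)*(2:ℝ)^(2+α) := by ring
      · rw [hm, min_eq_left hcase]
        have s1 : r/(R*d^(1+α)*(2:ℝ)^(2+α)) ≤ r/((2:ℝ)^(2+α)*(d*d^(1+α))) := by
          apply div_le_div_of_nonneg_left hr.le (by positivity)
          calc (2:ℝ)^(2+α)*(d*d^(1+α)) ≤ (2:ℝ)^(2+α)*(R*d^(1+α)) := by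
                apply mul_le_mul_of_nonneg_left _ hP.le
                exact mul_le_mul_of_nonneg_right (by linarith) hD.le
            _ = R*d^(1+α)*(2:ℝ)^(2+α) := by ring
        have s2 : r/((2:ℝ)^(2+α)*(d*d^(1+α))) ≤ π * (r/((2:ℝ)^(2+α)*(d*d^(1+α)))) :=
          le_mul_of_one_le_left (by positivity) hπ1
        linarith
    linarith
  -- UPPER BOUND
  have upper : Icirc α r ((R:ℝ):ℂ) ≤ 8*π*π^(2+α) * (r/(R*d^(1+α))) := by
    have hup1 : Icirc α r ((R:ℝ):ℂ) ≤ π^(2+α) * ∫ θ in (-π)..π, f θ := by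
      rw [hIcirc, ← intervalIntegral.integral_const_mul]
      exact integral_mono_on (by linarith) (hint_h _ _) ((hint_f _ _).const_mul _) hhf
    have heven : (∫ θ in (-π)..π, f θ) = 2 * ∫ θ in (0:ℝ)..π, f θ := by
      have h1 : (∫ θ in (-π)..(0:ℝ), f θ) = ∫ θ in (0:ℝ)..π, f θ := by
        have h2 : (∫ θ in (0:ℝ)..π, f (-θ)) = ∫ θ in (-π)..(0:ℝ), f θ := by
          simpa using intervalIntegral.integral_comp_neg (a := 0) (b := π) f
        rw [← h2]
        apply intervalIntegral.integral_congr
        intro θ _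
        simp [hf, abs_neg]
      have h3 := integral_add_adjacent_intervals (hint_f (-π) 0) (hint_f 0 π)
      rw [h1] at h3
      linarith
    rcases le_total (d/s) π with hcase | hcase
    · -- case B : d ≤ π s
      have hds : 0 < d/s := div_pos hd hs
      have hb1 : (∫ θ in (0:ℝ)..(d/s), f θ) ≤ r/(s*d^(1+α)) := by
        have hconst : (∫ _ in (0:ℝ)..(d/s), r/d^(2+α)) = (d/s) * (r/d^(2+α)) := by
          simp [intervalIntegral.integral_const, smul_eq_mul, mul_div_assoc]
        have hmono : (∫ θ in (0:ℝ)..(d/s), f θ) ≤ ∫ _ in (0:ℝ)..(d/s), r/d^(2+α) := by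
          apply integral_mono_on hds.le (hint_f _ _) intervalIntegrable_const
          intro θ _
          exact div_le_div_of_nonneg_left hr.le hde
            (Real.rpow_le_rpow hd.le (le_add_of_nonneg_right
              (mul_nonneg hs.le (abs_nonneg θ))) (by linarith))
        have heq : (d/s) * (r/d^(2+α)) = r/(s*d^(1+α)) := by
          rw [hsplit d hd]
          field_simp
        rw [hconst, heq] at hmono
        exact hmono
      have hb2 : (∫ θ in (d/s)..π, f θ) ≤ r/(s*d^(1+α)) := by
        have hse : (0:ℝ) < s^(2+α) := Real.rpow_pos_of_pos hs _
        have hgi : IntervalIntegrable (fun θ : ℝ => r*(s^(2+α))⁻¹ * θ^(-(2+α)))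
            volume (d/s) π := by
          apply IntervalIntegrable.const_mul
          exact intervalIntegrable_rpow (Or.inr (Set.notMem_uIcc_of_lt hds hπ0))
        have hmono : (∫ θ in (d/s)..π, f θ)
            ≤ ∫ θ in (d/s)..π, r*(s^(2+α))⁻¹ * θ^(-(2+α)) := by
          apply integral_mono_on hcase (hint_f _ _) hgi
          intro θ hθ
          have hθ0 : 0 < θ := lt_of_lt_of_le hds hθ.1
          have habsθ : |θ| = θ := abs_of_nonneg hθ0.le
          have hsθ : 0 < s*θ := mul_pos hs hθ0
          have heq2 : r*(s^(2+α))⁻¹ * θ^(-(2+α)) = r / (s*θ)^(2+α) := by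
            rw [Real.mul_rpow hs.le hθ0.le, Real.rpow_neg hθ0.le]
            field_simp
          rw [heq2]
          exact div_le_div_of_nonneg_left hr.le (Real.rpow_pos_of_pos hsθ _)
            (Real.rpow_le_rpow hsθ.le (by rw [habsθ]; linarith) (by linarith))
        have hval : (∫ θ in (d/s)..π, (θ:ℝ)^(-(2+α)))
            = (π^(-(2+α)+1) - (d/s)^(-(2+α)+1))/(-(2+α)+1) :=
          integral_rpow (Or.inr ⟨by intro hcontra; linarith [hcontra], -- -(2+α) ≠ -1
            Set.notMem_uIcc_of_lt hds hπ0⟩)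
        have hvb : (∫ θ in (d/s)..π, (θ:ℝ)^(-(2+α))) ≤ (d/s)^(-(1+α)) := by
          rw [hval, show -(2+α)+1 = -(1+α) by ring]
          have hu : (0:ℝ) ≤ (d/s)^(-(1+α)) := Real.rpow_nonneg hds.le _
          have hv : (0:ℝ) ≤ π^(-(1+α)) := Real.rpow_nonneg hπ0.le _
          rw [div_le_iff_of_neg (by linarith : -(1+α) < (0:ℝ))]
          nlinarith [mul_nonneg hu hα.le]
        have hfin : (∫ θ in (d/s)..π, r*(s^(2+α))⁻¹ * θ^(-(2+α))) ≤ r/(s*d^(1+α)) := by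
          rw [intervalIntegral.integral_const_mul]
          have hC : (0:ℝ) ≤ r*(s^(2+α))⁻¹ := by positivity
          calc r*(s^(2+α))⁻¹ * ∫ θ in (d/s)..π, (θ:ℝ)^(-(2+α))
              ≤ r*(s^(2+α))⁻¹ * (d/s)^(-(1+α)) := mul_le_mul_of_nonneg_left hvb hC
            _ = r/(s*d^(1+α)) := by
                rw [Real.rpow_neg hds.le, Real.div_rpow hd.le hs.le, hsplit s hs]
                have hsd : (0:ℝ) < s^(1+α) := Real.rpow_pos_of_pos hs _
                field_simp
        linarith
      have hsum : (∫ θ in (0:ℝ)..π, f θ) ≤ 2*(r/(s*d^(1+α))) := by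
        have hsp := integral_add_adjacent_intervals (hint_f 0 (d/s)) (hint_f (d/s) π)
        linarith
      have hs_low : R ≤ 2*π*s := by
        rcases le_total R (2*r) with h2r | h2r
        · have h1 : R/(2*π) ≤ s := by
            rw [hss, Real.le_sqrt (by positivity) hrR.le, div_pow, div_le_iff₀ (by positivity)]
            have e1 : R^2 ≤ 2*(r*R) := by nlinarith [mul_le_mul_of_nonneg_right h2r hR0.le]
            have e2 : (9:ℝ) ≤ π^2 := by nlinarith
            have e3 : r*R*9 ≤ r*R*π^2 := mul_le_mul_of_nonneg_left e2 hrR.le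
            nlinarith [hrR.le]
          rw [div_le_iff₀ (by positivity)] at h1
          linarith [h1]
        · rw [div_le_iff₀ hs] at hcase
          have : R - r ≥ R/2 := by linarith
          nlinarith [hcase]
      have hstep : r/(s*d^(1+α)) ≤ 2*π*(r/(R*d^(1+α))) := by
        rw [show 2*π*(r/(R*d^(1+α))) = (2*π*r)/(R*d^(1+α)) by ring,
          div_le_div_iff₀ (by positivity) (by positivity)]
        nlinarith [mul_le_mul_of_nonneg_right hs_low (mul_nonneg hr.le hD.le), hD, hr]
      calc Icirc α r ((R:ℝ):ℂ) ≤ π^(2+α) * ∫ θ in (-π)..π, f θ := hup1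
        _ = π^(2+α) * (2 * ∫ θ in (0:ℝ)..π, f θ) := by rw [heven]
        _ ≤ π^(2+α) * (2 * (2*(r/(s*d^(1+α))))) := by
            apply mul_le_mul_of_nonneg_left _ hπe.le
            linarith
        _ ≤ π^(2+α) * (2 * (2*(2*π*(r/(R*d^(1+α)))))) := by
            apply mul_le_mul_of_nonneg_left _ hπe.le
            linarith
        _ = 8*π*π^(2+α) * (r/(R*d^(1+α))) := by ring
    · -- case A : π s ≤ d
      rw [le_div_iff₀ hs] at hcase
      have hA1 : (∫ θ in (0:ℝ)..π, f θ) ≤ π * (r/d^(2+α)) := by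
        have hconst : (∫ _ in (0:ℝ)..π, r/d^(2+α)) = π * (r/d^(2+α)) := by
          simp [intervalIntegral.integral_const, smul_eq_mul, mul_div_assoc]
        rw [← hconst]
        apply integral_mono_on hπ0.le (hint_f _ _) intervalIntegrable_const
        intro θ _
        exact div_le_div_of_nonneg_left hr.le hde
          (Real.rpow_le_rpow hd.le (le_add_of_nonneg_right
            (mul_nonneg hs.le (abs_nonneg θ))) (by linarith))
      have h9r : 9*r ≤ R := by
        have hsq : (π*s)^2 ≤ d^2 := by
          apply pow_le_pow_left₀ (by positivity) hcase
        have hdR : d ≤ R := by rw [hdd]; linarith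
        have hd2 : d^2 ≤ R^2 := pow_le_pow_left₀ hd.le hdR 2
        have hπsq : (9:ℝ) ≤ π^2 := by nlinarith
        have h1 : 9*(r*R) ≤ R^2 := by nlinarith [hs2, hrR]
        nlinarith [hR0]
      have hRd : R ≤ (9/8)*d := by rw [hdd]; linarith
      have hstepA : r/(d*d^(1+α)) ≤ (9/8)*(r/(R*d^(1+α))) := by
        rw [show (9/8)*(r/(R*d^(1+α))) = ((9/8)*r)/(R*d^(1+α)) by ring,
          div_le_div_iff₀ (by positivity) (by positivity)]
        nlinarith [mul_le_mul_of_nonneg_right hRd (mul_nonneg hr.le hD.le), hD, hr]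
      calc Icirc α r ((R:ℝ):ℂ) ≤ π^(2+α) * ∫ θ in (-π)..π, f θ := hup1
        _ = π^(2+α) * (2 * ∫ θ in (0:ℝ)..π, f θ) := by rw [heven]
        _ ≤ π^(2+α) * (2 * (π * (r/d^(2+α)))) := by
            apply mul_le_mul_of_nonneg_left _ hπe.le
            linarith
        _ = π^(2+α) * (2 * (π * (r/(d*d^(1+α))))) := by rw [hsplit d hd]
        _ ≤ π^(2+α) * (2 * (π * ((9/8)*(r/(R*d^(1+α)))))) := by
            apply mul_le_mul_of_nonneg_left _ hπe.le
            apply mul_le_mul_of_nonneg_left _ (by norm_num)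
            exact mul_le_mul_of_nonneg_left hstepA hπ0.le
        _ = (9/4)*π*π^(2+α) * (r/(R*d^(1+α))) := by ring
        _ ≤ 8*π*π^(2+α) * (r/(R*d^(1+α))) := by
            apply mul_le_mul_of_nonneg_right _ (by positivity)
            nlinarith [hπe, hπ0]
  exact ⟨lower, upper⟩

/-- two-sided bounds on `I_r(x)` for `|x| > r`. -/
theorem Icirc_bounds_outside (α : ℝ) (hα : 0 < α) :
    ∃ a : ℝ, 1 < a ∧ ∀ r : ℝ, 0 < r → ∀ x : ℂ, r < ‖x‖ →
      a⁻¹ * (r / (‖x‖ * (‖x‖ - r) ^ (1 + α))) ≤ Icirc α r x ∧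
      Icirc α r x ≤ a * (r / (‖x‖ * (‖x‖ - r) ^ (1 + α))) := by
  have hπ0 : (0:ℝ) < π := Real.pi_pos
  have hπ3 : (3:ℝ) < π := Real.pi_gt_three
  refine ⟨8*π*(2*π)^(2+α), ?_, ?_⟩
  · have h1 : (1:ℝ) ≤ (2*π)^(2+α) := by
      calc (1:ℝ) = (2*π)^(0:ℝ) := (Real.rpow_zero _).symm
        _ ≤ (2*π)^(2+α) := Real.rpow_le_rpow_of_exponent_le (by linarith) (by linarith)
    nlinarith
  intro r hr x hx
  have hR0 : (0:ℝ) < ‖x‖ := hr.trans hx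
  have hd : (0:ℝ) < ‖x‖ - r := by linarith
  have hT0 : (0:ℝ) ≤ r / (‖x‖ * (‖x‖ - r) ^ (1 + α)) :=
    div_nonneg hr.le (mul_nonneg hR0.le (Real.rpow_nonneg hd.le _))
  have hrot : Icirc α r x = Icirc α r ((‖x‖ : ℝ) : ℂ) := Icirc_rot α r x
  obtain ⟨hlo, hhi⟩ := Icirc_bounds_real hα hr hx
  rw [← hrot] at hlo hhi
  have h2π : (2:ℝ)^(2+α) ≤ (2*π)^(2+α) :=
    Real.rpow_le_rpow (by norm_num) (by linarith) (by linarith)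
  have hπ2π : π^(2+α) ≤ (2*π)^(2+α) :=
    Real.rpow_le_rpow hπ0.le (by linarith) (by linarith)
  have hP : (0:ℝ) < (2:ℝ)^(2+α) := Real.rpow_pos_of_pos two_pos _
  constructor
  · have ha : (2:ℝ)^(2+α) ≤ 8*π*(2*π)^(2+α) := by
      calc (2:ℝ)^(2+α) ≤ (2*π)^(2+α) := h2π
        _ ≤ 8*π*(2*π)^(2+α) := le_mul_of_one_le_left
            (Real.rpow_nonneg (by linarith) _) (by linarith)
    have hainv : (8*π*(2*π)^(2+α))⁻¹ ≤ (2:ℝ)^(-(2+α)) := by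
      rw [Real.rpow_neg (by norm_num : (0:ℝ) ≤ 2)]
      exact inv_anti₀ hP ha
    calc (8*π*(2*π)^(2+α))⁻¹ * (r / (‖x‖ * (‖x‖ - r) ^ (1 + α)))
        ≤ (2:ℝ)^(-(2+α)) * (r / (‖x‖ * (‖x‖ - r) ^ (1 + α))) :=
          mul_le_mul_of_nonneg_right hainv hT0
      _ ≤ Icirc α r x := hlo
  · calc Icirc α r x ≤ 8*π*π^(2+α) * (r / (‖x‖ * (‖x‖ - r) ^ (1 + α))) := hhi
      _ ≤ 8*π*(2*π)^(2+α) * (r / (‖x‖ * (‖x‖ - r) ^ (1 + α))) := by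
          apply mul_le_mul_of_nonneg_right _ hT0
          nlinarith [hπ2π, hπ0]
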